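/- The following three subsets of ℂ^{d+1} coincide: (1) Z_{1+} = {exp(τM)c : M ∈ C₁, c ∈ X_d, Im τ > 0}; (2) A₁ = {x+iy : x,y ∈ ℝ^{d+1}, ⟨x,x⟩ − ⟨y,y⟩ = 1, ⟨x,y⟩ = 0, ⟨y,y⟩ > 0, y⁰x^d − x⁰y^d > 0}; (3) {Λ exp(it M_{0d}) e_d : Λ ∈ G₀, t > 0}. -/

import Mathlib

noncomputable section
open Matrix Complex

namespace AdS

/-- The metric signs: +1 for indices 0 and d, −1 otherwise. -/
def eta (d : ℕ) (μ : Fin (d+1)) : ℝ := if μ = 0 ∨ μ = Fin.last d then 1 else -1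

/-- The AdS bilinear form on ℝ^{d+1}. -/
def formR (d : ℕ) (x y : Fin (d+1) → ℝ) : ℝ := ∑ μ, eta d μ * x μ * y μ

/-- The ℂ-bilinear extension of the AdS form to ℂ^{d+1}. -/
def formC (d : ℕ) (z w : Fin (d+1) → ℂ) : ℂ := ∑ μ, (eta d μ : ℂ) * z μ * w μ

/-- The real AdS quadric. -/
def Xd (d : ℕ) : Set (Fin (d+1) → ℝ) := {x | formR d x x = 1}

/-- The complex AdS quadric. -/
def XdC (d : ℕ) : Set (Fin (d+1) → ℂ) := {z | formC d z z = 1}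

/-- ℓ(a∧b) : x ↦ ⟨b,x⟩a − ⟨a,x⟩b as a matrix. -/
def ell (d : ℕ) (a b : Fin (d+1) → ℝ) : Matrix (Fin (d+1)) (Fin (d+1)) ℝ :=
  Matrix.of fun i j => eta d j * (b j * a i - a j * b i)

/-- The AdS group. -/
def Ggrp (d : ℕ) : Set (Matrix (Fin (d+1)) (Fin (d+1)) ℝ) :=
  {Λ | ∀ x y, formR d (Λ.mulVec x) (Λ.mulVec y) = formR d x y}

/-- The connected component of the identity of the AdS group. -/
def G0 (d : ℕ) : Set (Matrix (Fin (d+1)) (Fin (d+1)) ℝ) :=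
  connectedComponentIn (Ggrp d) 1

/-- The set C₁ of Lie algebra generators. -/
def C1 (d : ℕ) : Set (Matrix (Fin (d+1)) (Fin (d+1)) ℝ) :=
  {M | ∃ a b : Fin (d+1) → ℝ, formR d a a = 1 ∧ formR d b b = 1 ∧ formR d a b = 0 ∧
    0 < a 0 * b (Fin.last d) - a (Fin.last d) * b 0 ∧ M = ell d a b}

/-- The cone C₊ generated by C₁. -/
def Cplus (d : ℕ) : Set (Matrix (Fin (d+1)) (Fin (d+1)) ℝ) :=
  {M | ∃ ρ : ℝ, 0 < ρ ∧ ∃ N ∈ C1 d, M = ρ • N}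

/-- A real matrix viewed as a complex one. -/
def toC (d : ℕ) (M : Matrix (Fin (d+1)) (Fin (d+1)) ℝ) : Matrix (Fin (d+1)) (Fin (d+1)) ℂ :=
  M.map Complex.ofReal

/-- A real vector viewed as a complex one. -/
def toCv (d : ℕ) (x : Fin (d+1) → ℝ) : Fin (d+1) → ℂ := fun μ => (x μ : ℂ)

/-- The generator M₀d = ℓ(e₀ ∧ e_d). -/
def M0d (d : ℕ) : Matrix (Fin (d+1)) (Fin (d+1)) ℝ :=
  ell d (Pi.single 0 1) (Pi.single (Fin.last d) 1)

/-- The future tuboid Z₁₊ of the complex AdS quadric. -/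
def Z1plus (d : ℕ) : Set (Fin (d+1) → ℂ) :=
  {z | ∃ M ∈ C1 d, ∃ c ∈ Xd d, ∃ τ : ℂ, 0 < τ.im ∧
    z = (NormedSpace.exp (τ • toC d M)).mulVec (toCv d c)}

/-- The past tuboid Z₁₋ of the complex AdS quadric. -/
def Z1minus (d : ℕ) : Set (Fin (d+1) → ℂ) :=
  {z | ∃ M ∈ C1 d, ∃ c ∈ Xd d, ∃ τ : ℂ, τ.im < 0 ∧
    z = (NormedSpace.exp (τ • toC d M)).mulVec (toCv d c)}
/-- The set A₁ = {x+iy : ⟨x,x⟩−⟨y,y⟩ = 1, ⟨x,y⟩ = 0, ⟨y,y⟩ > 0, y⁰x^d − x⁰y^d > 0}. -/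
def A1 (d : ℕ) : Set (Fin (d+1) → ℂ) :=
  {z | formR d (fun μ => (z μ).re) (fun μ => (z μ).re)
        - formR d (fun μ => (z μ).im) (fun μ => (z μ).im) = 1 ∧
      formR d (fun μ => (z μ).re) (fun μ => (z μ).im) = 0 ∧
      0 < formR d (fun μ => (z μ).im) (fun μ => (z μ).im) ∧
      0 < (z 0).im * (z (Fin.last d)).re - (z 0).re * (z (Fin.last d)).im}




lemma eta_zero (d : ℕ) : eta d 0 = 1 := by simp [eta]
lemma eta_last (d : ℕ) : eta d (Fin.last d) = 1 := by simp [eta]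
lemma eta_sq (d : ℕ) (μ : Fin (d+1)) : eta d μ * eta d μ = 1 := by
  unfold eta; split <;> norm_num
lemma eta_interior (d : ℕ) (μ : Fin (d+1)) (h0 : μ ≠ 0) (hl : μ ≠ Fin.last d) : eta d μ = -1 := by
  simp [eta, h0, hl]

lemma formR_symm (d : ℕ) (x y : Fin (d+1) → ℝ) : formR d x y = formR d y x := by
  unfold formR; exact Finset.sum_congr rfl fun μ _ => by ring
lemma formR_add_left (d : ℕ) (x x' y : Fin (d+1) → ℝ) :
    formR d (x + x') y = formR d x y + formR d x' y := by
  unfold formR; rw [← Finset.sum_add_distrib]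
  exact Finset.sum_congr rfl fun μ _ => by simp [Pi.add_apply]; ring
lemma formR_smul_left (d : ℕ) (r : ℝ) (x y : Fin (d+1) → ℝ) :
    formR d (r • x) y = r * formR d x y := by
  unfold formR; rw [Finset.mul_sum]
  exact Finset.sum_congr rfl fun μ _ => by simp [Pi.smul_apply]; ring
lemma formR_sub_left (d : ℕ) (x x' y : Fin (d+1) → ℝ) :
    formR d (x - x') y = formR d x y - formR d x' y := by
  unfold formR; rw [← Finset.sum_sub_distrib]
  exact Finset.sum_congr rfl fun μ _ => by simp [Pi.sub_apply]; ring
lemma formR_single_left (d : ℕ) (i : Fin (d+1)) (c : ℝ) (y : Fin (d+1) → ℝ) :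
    formR d (Pi.single i c) y = eta d i * c * y i := by
  unfold formR
  rw [Finset.sum_eq_single i]
  · simp
  · intro b _ hb; simp [Pi.single_eq_of_ne hb]
  · simp


lemma sum_split_two {n : ℕ} (i k : Fin n) (hik : i ≠ k) (f : Fin n → ℝ) :
    ∑ μ, f μ = f i + f k + ∑ μ ∈ (Finset.univ \ {i, k}), f μ := by
  have h : ({i, k} : Finset (Fin n)) ⊆ Finset.univ := Finset.subset_univ _
  rw [← Finset.sum_sdiff h, Finset.sum_pair hik]; ring

def twoPlane (d : ℕ) (i k : Fin (d+1)) (pii pik pki pkk : ℝ) :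
    Matrix (Fin (d+1)) (Fin (d+1)) ℝ :=
  Matrix.of fun p q =>
    if p = i then (if q = i then pii else if q = k then pik else 0)
    else if p = k then (if q = i then pki else if q = k then pkk else 0)
    else (if q = p then 1 else 0)

lemma twoPlane_mulVec (d : ℕ) (i k : Fin (d+1)) (hik : i ≠ k) (pii pik pki pkk : ℝ)
    (x : Fin (d+1) → ℝ) (p : Fin (d+1)) :
    (twoPlane d i k pii pik pki pkk *ᵥ x) p =
      if p = i then pii * x i + pik * x k
      else if p = k then pki * x i + pkk * x k else x p := by
  unfold twoPlane
  simp only [mulVec, dotProduct, Matrix.of_apply]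
  split_ifs with h1 h2
  · subst h1
    rw [Finset.sum_eq_add_of_mem p k (Finset.mem_univ _) (Finset.mem_univ _) hik ?_]
    · simp [hik.symm]
    · intro c _ hc; simp [hc.1, hc.2]
  · subst h2
    rw [Finset.sum_eq_add_of_mem i p (Finset.mem_univ _) (Finset.mem_univ _) hik ?_]
    · simp [hik, h1, Ne.symm h1]
    · intro c _ hc; simp [hc.1, hc.2]
  · rw [Finset.sum_eq_single p]
    · simp [h1, h2]
    · intro b _ hb; simp [h1, h2, hb, Ne.symm hb]
    · simp



def etaM (d : ℕ) : Matrix (Fin (d+1)) (Fin (d+1)) ℝ := Matrix.diagonal (eta d)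

lemma etaM_mul_etaM (d : ℕ) : etaM d * etaM d = 1 := by
  rw [etaM, Matrix.diagonal_mul_diagonal]
  have : (fun i => eta d i * eta d i) = fun _ => (1:ℝ) := funext (eta_sq d)
  rw [this, Matrix.diagonal_one]

lemma formR_eq_dot (d : ℕ) (x y : Fin (d+1) → ℝ) : formR d x y = x ⬝ᵥ (etaM d *ᵥ y) := by
  unfold formR etaM dotProduct
  refine Finset.sum_congr rfl fun μ _ => ?_
  rw [Matrix.mulVec_diagonal]; ring

lemma dot_single_single {d : ℕ} (M : Matrix (Fin (d+1)) (Fin (d+1)) ℝ) (i j : Fin (d+1)) :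
    Pi.single i 1 ⬝ᵥ (M *ᵥ Pi.single j 1) = M i j := by
  rw [Matrix.mulVec_single, single_dotProduct]; simp

lemma one_mem_Ggrp (d : ℕ) : (1 : Matrix (Fin (d+1)) (Fin (d+1)) ℝ) ∈ Ggrp d := by
  intro x y; rw [Matrix.one_mulVec, Matrix.one_mulVec]

lemma Ggrp_mul {d : ℕ} {A B : Matrix (Fin (d+1)) (Fin (d+1)) ℝ}
    (hA : A ∈ Ggrp d) (hB : B ∈ Ggrp d) : A * B ∈ Ggrp d := by
  intro x y
  rw [← Matrix.mulVec_mulVec, ← Matrix.mulVec_mulVec, hA, hB]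

lemma Ggrp_matrix_eq {d : ℕ} {Λ : Matrix (Fin (d+1)) (Fin (d+1)) ℝ} (h : Λ ∈ Ggrp d) :
    Λᵀ * etaM d * Λ = etaM d := by
  ext i j
  have key := h (Pi.single i 1) (Pi.single j 1)
  rw [formR_eq_dot, formR_eq_dot, Matrix.mulVec_mulVec, Matrix.dotProduct_mulVec,
    ← Matrix.vecMul_transpose, Matrix.vecMul_vecMul, ← Matrix.dotProduct_mulVec,
    ← Matrix.mul_assoc] at key
  rw [dot_single_single, dot_single_single] at key
  exact key

def Ginv (d : ℕ) (Λ : Matrix (Fin (d+1)) (Fin (d+1)) ℝ) : Matrix (Fin (d+1)) (Fin (d+1)) ℝ :=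
  etaM d * Λᵀ * etaM d

lemma Ginv_mul {d : ℕ} {Λ : Matrix (Fin (d+1)) (Fin (d+1)) ℝ} (h : Λ ∈ Ggrp d) :
    Ginv d Λ * Λ = 1 := by
  have := Ggrp_matrix_eq h
  have h2 : Ginv d Λ * Λ = etaM d * (Λᵀ * etaM d * Λ) := by
    simp only [Ginv, Matrix.mul_assoc]
  rw [h2, this, etaM_mul_etaM]

lemma mul_Ginv {d : ℕ} {Λ : Matrix (Fin (d+1)) (Fin (d+1)) ℝ} (h : Λ ∈ Ggrp d) :
    Λ * Ginv d Λ = 1 := mul_eq_one_comm.mp (Ginv_mul h)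

lemma Ginv_mem_Ggrp {d : ℕ} {Λ : Matrix (Fin (d+1)) (Fin (d+1)) ℝ} (h : Λ ∈ Ggrp d) :
    Ginv d Λ ∈ Ggrp d := by
  intro x y
  have h2 := h (Ginv d Λ *ᵥ x) (Ginv d Λ *ᵥ y)
  rw [Matrix.mulVec_mulVec, Matrix.mulVec_mulVec, mul_Ginv h, Matrix.one_mulVec,
    Matrix.one_mulVec] at h2
  exact h2.symm

lemma one_mem_G0 (d : ℕ) : (1 : Matrix (Fin (d+1)) (Fin (d+1)) ℝ) ∈ G0 d :=
  mem_connectedComponentIn (one_mem_Ggrp d)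

lemma G0_subset_Ggrp (d : ℕ) : G0 d ⊆ Ggrp d := connectedComponentIn_subset _ _

lemma G0_mul {d : ℕ} {A B : Matrix (Fin (d+1)) (Fin (d+1)) ℝ}
    (hA : A ∈ G0 d) (hB : B ∈ G0 d) : A * B ∈ G0 d := by
  have hS : IsPreconnected ((fun C => A * C) '' G0 d) :=
    (isPreconnected_connectedComponentIn).image _
      ((continuous_const.matrix_mul continuous_id).continuousOn)
  have hsub : ((fun C => A * C) '' G0 d) ⊆ Ggrp d := by
    rintro _ ⟨C, hC, rfl⟩
    exact Ggrp_mul (G0_subset_Ggrp d hA) (G0_subset_Ggrp d hC)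
  have hAin : A ∈ ((fun C => A * C) '' G0 d) := ⟨1, one_mem_G0 d, by simp⟩
  have := hS.subset_connectedComponentIn hAin hsub
  rw [← connectedComponentIn_eq hA] at this
  exact this ⟨B, hB, rfl⟩

lemma G0_inv {d : ℕ} {A : Matrix (Fin (d+1)) (Fin (d+1)) ℝ} (hA : A ∈ G0 d) :
    Ginv d A ∈ G0 d := by
  have hc : Continuous (Ginv d) := by
    unfold Ginv
    exact (continuous_const.matrix_mul (continuous_id.matrix_transpose)).matrix_mul
      continuous_const
  have hS : IsPreconnected ((Ginv d) '' G0 d) :=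
    (isPreconnected_connectedComponentIn).image _ hc.continuousOn
  have hsub : (Ginv d) '' G0 d ⊆ Ggrp d := by
    rintro _ ⟨C, hC, rfl⟩; exact Ginv_mem_Ggrp (G0_subset_Ggrp d hC)
  have h1 : (1 : Matrix (Fin (d+1)) (Fin (d+1)) ℝ) ∈ (Ginv d) '' G0 d := by
    refine ⟨1, one_mem_G0 d, ?_⟩
    simp [Ginv, etaM_mul_etaM]
  exact hS.subset_connectedComponentIn h1 hsub ⟨A, hA, rfl⟩

lemma G0_of_path {d : ℕ} (R : ℝ → Matrix (Fin (d+1)) (Fin (d+1)) ℝ)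
    (hcont : Continuous R) (h0 : R 0 = 1) (hmem : ∀ s, R s ∈ Ggrp d) (s : ℝ) :
    R s ∈ G0 d := by
  have hS : IsPreconnected (Set.range R) := by
    rw [← Set.image_univ]
    exact isPreconnected_univ.image _ hcont.continuousOn
  have h1 : (1 : Matrix (Fin (d+1)) (Fin (d+1)) ℝ) ∈ Set.range R := ⟨0, h0⟩
  exact hS.subset_connectedComponentIn h1 (Set.range_subset_iff.mpr hmem) ⟨s, rfl⟩

lemma formR_add_right (d : ℕ) (x y y' : Fin (d+1) → ℝ) :
    formR d x (y + y') = formR d x y + formR d x y' := by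
  rw [formR_symm, formR_add_left, formR_symm d y x, formR_symm d y' x]
lemma formR_smul_right (d : ℕ) (r : ℝ) (x y : Fin (d+1) → ℝ) :
    formR d x (r • y) = r * formR d x y := by
  rw [formR_symm, formR_smul_left, formR_symm d y x]
lemma formR_sub_right (d : ℕ) (x y y' : Fin (d+1) → ℝ) :
    formR d x (y - y') = formR d x y - formR d x y' := by
  rw [formR_symm, formR_sub_left, formR_symm d y x, formR_symm d y' x]

/-- A vector whose two "positive" components vanish has nonpositive norm. -/
lemma formR_nonpos (d : ℕ) (w : Fin (d+1) → ℝ) (h0 : w 0 = 0) (hl : w (Fin.last d) = 0) :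
    formR d w w ≤ 0 := by
  apply Finset.sum_nonpos
  intro μ _
  by_cases hμ : μ = 0 ∨ μ = Fin.last d
  · rcases hμ with h | h <;> subst h <;> simp [h0, hl]
  · push_neg at hμ
    rw [eta_interior d μ hμ.1 hμ.2]
    nlinarith [sq_nonneg (w μ)]

/-- Two positive-norm orthogonal vectors have nonvanishing "0d-determinant". -/
lemma or_ne_zero {d : ℕ} {x y : Fin (d+1) → ℝ} (hx : 0 < formR d x x)
    (hy : 0 < formR d y y) (hxy : formR d x y = 0) :
    y 0 * x (Fin.last d) - x 0 * y (Fin.last d) ≠ 0 := by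
  intro h
  have hyx : formR d y x = 0 := (formR_symm d y x).trans hxy
  have key : ∀ c1 c2 : ℝ, formR d (c1 • x - c2 • y) (c1 • x - c2 • y)
      = c1^2 * formR d x x + c2^2 * formR d y y := by
    intro c1 c2
    rw [formR_sub_left, formR_sub_right, formR_sub_right, formR_smul_left, formR_smul_left,
      formR_smul_left, formR_smul_left, formR_smul_right, formR_smul_right, formR_smul_right,
      formR_smul_right, hxy, hyx]
    ring
  have key2 : ∀ u v : ℝ, u^2 * formR d x x + v^2 * formR d y y ≤ 0 → u = 0 ∧ v = 0 := by
    intro u v huv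
    have hu : u^2 ≤ 0 := by nlinarith [mul_nonneg (sq_nonneg v) hy.le]
    have hv : v^2 ≤ 0 := by nlinarith [mul_nonneg (sq_nonneg u) hx.le]
    exact ⟨pow_eq_zero_iff two_ne_zero |>.mp (le_antisymm hu (sq_nonneg u)),
      pow_eq_zero_iff two_ne_zero |>.mp (le_antisymm hv (sq_nonneg v))⟩
  have h1 : formR d ((y 0) • x - (x 0) • y) ((y 0) • x - (x 0) • y) ≤ 0 := by
    apply formR_nonpos <;> simp [Pi.sub_apply, Pi.smul_apply] <;> linarith [h]
  rw [key] at h1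
  have hx0 := key2 _ _ h1
  have h2 : formR d ((y (Fin.last d)) • x - (x (Fin.last d)) • y)
      ((y (Fin.last d)) • x - (x (Fin.last d)) • y) ≤ 0 := by
    apply formR_nonpos <;> simp [Pi.sub_apply, Pi.smul_apply] <;> nlinarith [hx0.1, hx0.2]
  rw [key] at h2
  have hxl := key2 _ _ h2
  have := formR_nonpos d x hx0.2 hxl.2
  linarith

/-- Orthogonal complement of a positive orthonormal pair is negative semidefinite. -/
lemma orth_nonpos {d : ℕ} {a b v : Fin (d+1) → ℝ} (ha : formR d a a = 1)
    (hb : formR d b b = 1) (hab : formR d a b = 0) (hav : formR d a v = 0)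
    (hbv : formR d b v = 0) : formR d v v ≤ 0 := by
  by_contra hpos
  push_neg at hpos
  have hD : a 0 * b (Fin.last d) - b 0 * a (Fin.last d) ≠ 0 := by
    have := or_ne_zero (d := d) (x := b) (y := a) (by rw [hb]; norm_num)
      (by rw [ha]; norm_num) ((formR_symm d b a).trans hab)
    intro hc; exact this (by linarith)
  set D := a 0 * b (Fin.last d) - b 0 * a (Fin.last d) with hDdef
  set c1 := v 0 * b (Fin.last d) - v (Fin.last d) * b 0 with hc1
  set c2 := a 0 * v (Fin.last d) - a (Fin.last d) * v 0 with hc2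
  set w := c1 • a + c2 • b - D • v with hw
  have hba : formR d b a = 0 := (formR_symm d b a).trans hab
  have hva : formR d v a = 0 := (formR_symm d v a).trans hav
  have hvb : formR d v b = 0 := (formR_symm d v b).trans hbv
  have hval : formR d w w = c1^2 + c2^2 + D^2 * formR d v v := by
    rw [hw]
    simp only [formR_sub_left, formR_sub_right, formR_add_left, formR_add_right,
      formR_smul_left, formR_smul_right, ha, hb, hab, hba, hav, hbv, hva, hvb]
    ring
  have hw0 : w 0 = 0 := by
    simp only [hw, Pi.sub_apply, Pi.add_apply, Pi.smul_apply, smul_eq_mul, hc1, hc2, hDdef]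
    ring
  have hwl : w (Fin.last d) = 0 := by
    simp only [hw, Pi.sub_apply, Pi.add_apply, Pi.smul_apply, smul_eq_mul, hc1, hc2, hDdef]
    ring
  have := formR_nonpos d w hw0 hwl
  rw [hval] at this
  have hD2 : 0 < D^2 := by positivity
  nlinarith [sq_nonneg c1, sq_nonneg c2]

/-- Sign constancy of a nonvanishing continuous function on a preconnected set. -/
lemma sign_const {X : Type*} [TopologicalSpace X] {S : Set X} (hS : IsPreconnected S)
    {f : X → ℝ} (hf : ContinuousOn f S) (hne : ∀ p ∈ S, f p ≠ 0) {p q : X}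
    (hp : p ∈ S) (hq : q ∈ S) (h : 0 < f p) : 0 < f q := by
  by_contra hle
  push_neg at hle
  have hlt : f q < 0 := lt_of_le_of_ne hle (hne q hq)
  have : (0:ℝ) ∈ Set.Icc (f q) (f p) := ⟨hlt.le, h.le⟩
  obtain ⟨r, hr, hr0⟩ := hS.intermediate_value hq hp hf this
  exact hne r hr hr0

/-- `G₀` preserves the positivity of the `0d`-determinant of positive orthonormal pairs. -/
lemma G0_orientation {d : ℕ} {Λ : Matrix (Fin (d+1)) (Fin (d+1)) ℝ} (hΛ : Λ ∈ G0 d)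
    {b a : Fin (d+1) → ℝ} (hb : formR d b b = 1) (ha : formR d a a = 1)
    (hba : formR d b a = 0) (hor : 0 < b 0 * a (Fin.last d) - b (Fin.last d) * a 0) :
    0 < (Λ *ᵥ b) 0 * (Λ *ᵥ a) (Fin.last d) - (Λ *ᵥ b) (Fin.last d) * (Λ *ᵥ a) 0 := by
  set f : Matrix (Fin (d+1)) (Fin (d+1)) ℝ → ℝ := fun Γ =>
    (Γ *ᵥ b) 0 * (Γ *ᵥ a) (Fin.last d) - (Γ *ᵥ b) (Fin.last d) * (Γ *ᵥ a) 0 with hf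
  have hcomp : ∀ (c : Fin (d+1) → ℝ) (μ : Fin (d+1)),
      Continuous fun Γ : Matrix (Fin (d+1)) (Fin (d+1)) ℝ => (Γ *ᵥ c) μ := by
    intro c μ
    simp only [Matrix.mulVec, dotProduct]
    exact continuous_finset_sum _ fun j _ =>
      ((continuous_id.matrix_elem μ j).mul continuous_const)
  have hcont : Continuous f := by
    apply Continuous.sub <;> apply Continuous.mul <;> exact hcomp _ _
  have hne : ∀ Γ ∈ Ggrp d, f Γ ≠ 0 := by
    intro Γ hΓ
    have h1 : 0 < formR d (Γ *ᵥ a) (Γ *ᵥ a) := by rw [hΓ, ha]; norm_num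
    have h2 : 0 < formR d (Γ *ᵥ b) (Γ *ᵥ b) := by rw [hΓ, hb]; norm_num
    have h3 : formR d (Γ *ᵥ a) (Γ *ᵥ b) = 0 := by
      rw [hΓ]; exact (formR_symm d a b).trans hba
    have := or_ne_zero h1 h2 h3
    intro hc; apply this
    simp only [hf] at hc; linarith
  have h1G : f 1 = b 0 * a (Fin.last d) - b (Fin.last d) * a 0 := by
    simp [hf, Matrix.one_mulVec]
  exact sign_const (isPreconnected_connectedComponentIn) hcont.continuousOn
    (fun p hp => hne p (G0_subset_Ggrp d hp)) (one_mem_G0 d) hΛ (by rw [h1G]; exact hor)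

lemma exists_cos_sin (u v : ℝ) (h : u^2 + v^2 = 1) :
    ∃ θ : ℝ, Real.cos θ = u ∧ Real.sin θ = v := by
  have hu1 : -1 ≤ u := by nlinarith [sq_nonneg v]
  have hu2 : u ≤ 1 := by nlinarith [sq_nonneg v]
  rcases le_or_gt 0 v with hv | hv
  · refine ⟨Real.arccos u, Real.cos_arccos hu1 hu2, ?_⟩
    rw [Real.sin_arccos]
    rw [show 1 - u^2 = v^2 by linarith, Real.sqrt_sq hv]
  · refine ⟨-Real.arccos u, by rw [Real.cos_neg]; exact Real.cos_arccos hu1 hu2, ?_⟩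
    rw [Real.sin_neg, Real.sin_arccos]
    rw [show 1 - u^2 = v^2 by linarith, Real.sqrt_sq_eq_abs, abs_of_neg hv, neg_neg]

lemma rot_mem_Ggrp {d : ℕ} {i k : Fin (d+1)} (hik : i ≠ k) (he : eta d i = eta d k)
    (θ : ℝ) : twoPlane d i k (Real.cos θ) (-Real.sin θ) (Real.sin θ) (Real.cos θ) ∈ Ggrp d := by
  intro x y
  unfold formR
  rw [sum_split_two i k hik, sum_split_two i k hik
    (f := fun μ => eta d μ * x μ * y μ)]
  have hoff : ∀ μ ∈ Finset.univ \ ({i, k} : Finset (Fin (d+1))),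
      eta d μ * (twoPlane d i k (Real.cos θ) (-Real.sin θ) (Real.sin θ) (Real.cos θ) *ᵥ x) μ
        * (twoPlane d i k (Real.cos θ) (-Real.sin θ) (Real.sin θ) (Real.cos θ) *ᵥ y) μ
      = eta d μ * x μ * y μ := by
    intro μ hμ
    simp only [Finset.mem_sdiff, Finset.mem_insert, Finset.mem_singleton] at hμ
    push_neg at hμ
    rw [twoPlane_mulVec d i k hik _ _ _ _ x μ, twoPlane_mulVec d i k hik _ _ _ _ y μ]
    simp [hμ.2.1, hμ.2.2]
  rw [Finset.sum_congr rfl hoff]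
  rw [twoPlane_mulVec d i k hik _ _ _ _ x i, twoPlane_mulVec d i k hik _ _ _ _ y i,
    twoPlane_mulVec d i k hik _ _ _ _ x k, twoPlane_mulVec d i k hik _ _ _ _ y k]
  simp only [if_pos rfl, if_neg hik, if_neg (Ne.symm hik), eq_self_iff_true, if_true]
  rw [he]
  have hcs := Real.sin_sq_add_cos_sq θ
  linear_combination (eta d k * (x i * y i + x k * y k)) * hcs

lemma boost_mem_Ggrp {d : ℕ} {i k : Fin (d+1)} (hik : i ≠ k) (he : eta d i = -eta d k)
    (ξ : ℝ) : twoPlane d i k (Real.cosh ξ) (Real.sinh ξ) (Real.sinh ξ) (Real.cosh ξ) ∈ Ggrp d := by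
  intro x y
  unfold formR
  rw [sum_split_two i k hik, sum_split_two i k hik
    (f := fun μ => eta d μ * x μ * y μ)]
  have hoff : ∀ μ ∈ Finset.univ \ ({i, k} : Finset (Fin (d+1))),
      eta d μ * (twoPlane d i k (Real.cosh ξ) (Real.sinh ξ) (Real.sinh ξ) (Real.cosh ξ) *ᵥ x) μ
        * (twoPlane d i k (Real.cosh ξ) (Real.sinh ξ) (Real.sinh ξ) (Real.cosh ξ) *ᵥ y) μ
      = eta d μ * x μ * y μ := by
    intro μ hμ
    simp only [Finset.mem_sdiff, Finset.mem_insert, Finset.mem_singleton] at hμ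
    push_neg at hμ
    rw [twoPlane_mulVec d i k hik _ _ _ _ x μ, twoPlane_mulVec d i k hik _ _ _ _ y μ]
    simp [hμ.2.1, hμ.2.2]
  rw [Finset.sum_congr rfl hoff]
  rw [twoPlane_mulVec d i k hik _ _ _ _ x i, twoPlane_mulVec d i k hik _ _ _ _ y i,
    twoPlane_mulVec d i k hik _ _ _ _ x k, twoPlane_mulVec d i k hik _ _ _ _ y k]
  simp only [if_pos rfl, if_neg hik, if_neg (Ne.symm hik), eq_self_iff_true, if_true]
  rw [he]
  have hcs := Real.cosh_sq_sub_sinh_sq ξ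
  linear_combination (eta d k * (x k * y k - x i * y i)) * hcs

lemma twoPlane_continuous_rot {d : ℕ} (i k : Fin (d+1)) :
    Continuous (fun θ : ℝ =>
      twoPlane d i k (Real.cos θ) (-Real.sin θ) (Real.sin θ) (Real.cos θ)) := by
  apply continuous_matrix
  intro p q
  unfold twoPlane
  simp only [Matrix.of_apply]
  split_ifs <;> fun_prop

lemma twoPlane_continuous_boost {d : ℕ} (i k : Fin (d+1)) :
    Continuous (fun ξ : ℝ =>
      twoPlane d i k (Real.cosh ξ) (Real.sinh ξ) (Real.sinh ξ) (Real.cosh ξ)) := by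
  apply continuous_matrix
  intro p q
  unfold twoPlane
  simp only [Matrix.of_apply]
  split_ifs <;> fun_prop

lemma twoPlane_id {d : ℕ} (i k : Fin (d+1)) : twoPlane d i k 1 0 0 1 = 1 := by
  ext p q
  unfold twoPlane
  simp only [Matrix.of_apply, Matrix.one_apply]
  split_ifs <;> first | rfl | (exfalso; simp_all)

lemma rot_mem_G0 {d : ℕ} {i k : Fin (d+1)} (hik : i ≠ k) (he : eta d i = eta d k) (θ : ℝ) :
    twoPlane d i k (Real.cos θ) (-Real.sin θ) (Real.sin θ) (Real.cos θ) ∈ G0 d := by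
  apply G0_of_path (fun θ : ℝ =>
      twoPlane d i k (Real.cos θ) (-Real.sin θ) (Real.sin θ) (Real.cos θ))
    (twoPlane_continuous_rot i k) _ (fun s => rot_mem_Ggrp hik he s)
  simp [twoPlane_id]

lemma boost_mem_G0 {d : ℕ} {i k : Fin (d+1)} (hik : i ≠ k) (he : eta d i = -eta d k) (ξ : ℝ) :
    twoPlane d i k (Real.cosh ξ) (Real.sinh ξ) (Real.sinh ξ) (Real.cosh ξ) ∈ G0 d := by
  apply G0_of_path (fun ξ : ℝ =>
      twoPlane d i k (Real.cosh ξ) (Real.sinh ξ) (Real.sinh ξ) (Real.cosh ξ))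
    (twoPlane_continuous_boost i k) _ (fun s => boost_mem_Ggrp hik he s)
  simp [twoPlane_id]

lemma eta_eq_one_iff (d : ℕ) (μ : Fin (d+1)) : eta d μ = 1 ↔ (μ = 0 ∨ μ = Fin.last d) := by
  unfold eta
  by_cases h : μ = 0 ∨ μ = Fin.last d
  · rw [if_pos h]; exact iff_of_true rfl h
  · rw [if_neg h]
    constructor
    · intro hc; norm_num at hc
    · intro hc; exact absurd hc h

lemma eta_values (d : ℕ) (μ : Fin (d+1)) : eta d μ = 1 ∨ eta d μ = -1 := by
  unfold eta; split <;> norm_num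

lemma sq_one_pos {c : ℝ} (h : c^2 = 1) (hc : 0 < c) : c = 1 := by
  have h2 : (c - 1) * (c + 1) = 0 := by linear_combination h
  rcases mul_eq_zero.mp h2 with h3 | h3
  · linarith
  · linarith

lemma eta_interior_of_two_pivots {d : ℕ} {i o : Fin (d+1)} (hi : eta d i = 1)
    (ho : eta d o = 1) (hio : i ≠ o) {μ : Fin (d+1)} (hμi : μ ≠ i) (hμo : μ ≠ o) :
    eta d μ = -1 := by
  rcases eta_values d μ with h | h
  · exfalso
    rcases (eta_eq_one_iff d μ).mp h with rfl | rfl <;>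
      rcases (eta_eq_one_iff d i).mp hi with rfl | rfl <;>
      rcases (eta_eq_one_iff d o).mp ho with rfl | rfl <;> simp_all
  · exact h

lemma formR_self_decomp {d : ℕ} {i o : Fin (d+1)} (hi : eta d i = 1) (ho : eta d o = 1)
    (hio : i ≠ o) (x : Fin (d+1) → ℝ) :
    formR d x x = x i * x i + x o * x o - ∑ μ ∈ Finset.univ \ {i, o}, x μ * x μ := by
  rw [formR, sum_split_two i o hio (f := fun μ => eta d μ * x μ * x μ), hi, ho]
  have : ∑ μ ∈ Finset.univ \ {i, o}, eta d μ * x μ * x μ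
      = -∑ μ ∈ Finset.univ \ {i, o}, x μ * x μ := by
    rw [← Finset.sum_neg_distrib]
    refine Finset.sum_congr rfl fun μ hμ => ?_
    simp only [Finset.mem_sdiff, Finset.mem_insert, Finset.mem_singleton] at hμ
    push_neg at hμ
    rw [eta_interior_of_two_pivots hi ho hio hμ.2.1 hμ.2.2]; ring
  rw [this]; ring

/-- Kill one coordinate with a boost. -/
lemma exists_boost {d : ℕ} {i k : Fin (d+1)} (hik : i ≠ k) (he : eta d i = -eta d k)
    (x : Fin (d+1) → ℝ) (hbig : x k ^ 2 < x i ^ 2) :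
    ∃ Λ ∈ G0 d, (Λ *ᵥ x) k = 0 ∧ (0 < x i → 0 < (Λ *ᵥ x) i) ∧
      (∀ p, p ≠ i → p ≠ k → (Λ *ᵥ x) p = x p) ∧
      (∀ w : Fin (d+1) → ℝ, w i = 0 → w k = 0 → Λ *ᵥ w = w) := by
  have hxi : x i ≠ 0 := by
    intro h; rw [h] at hbig; nlinarith [sq_nonneg (x k)]
  have hR2 : 0 < x i^2 - x k^2 := by linarith
  set R := Real.sqrt (x i^2 - x k^2) with hRdef
  have hR : 0 < R := Real.sqrt_pos.mpr hR2
  have hRsq : R^2 = x i^2 - x k^2 := Real.sq_sqrt hR2.le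
  have habs : 0 < |x i| := abs_pos.mpr hxi
  set s0 := -(x k * x i) / (R * |x i|) with hs0
  set ξ := Real.arsinh s0 with hξ
  have hsinh : Real.sinh ξ = s0 := Real.sinh_arsinh s0
  have hRne : R ≠ 0 := ne_of_gt hR
  have habsne : |x i| ≠ 0 := ne_of_gt habs
  have habs2 : |x i| * |x i| = x i * x i := abs_mul_abs_self (x i)
  have hs0sq : s0^2 = x k^2 / R^2 := by
    rw [hs0, div_pow, mul_pow, neg_sq, mul_pow, _root_.sq_abs]
    exact mul_div_mul_right _ _ (pow_ne_zero 2 hxi)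
  have hC2 : Real.cosh ξ^2 = x i^2 / R^2 := by
    rw [Real.cosh_sq, hsinh, hs0sq, div_add' _ _ _ (pow_ne_zero 2 hRne), one_mul, hRsq]
    congr 1
    ring
  have hcosh : Real.cosh ξ = |x i| / R := by
    have habsq : (|x i|/R)^2 = x i^2/R^2 := by rw [div_pow, _root_.sq_abs]
    have h2 : (Real.cosh ξ - |x i|/R) * (Real.cosh ξ + |x i|/R) = 0 := by
      linear_combination hC2 - habsq
    rcases mul_eq_zero.mp h2 with h3 | h3
    · linarith
    · exfalso
      have := Real.cosh_pos ξ
      have : 0 < |x i| / R := by positivity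
      linarith [Real.cosh_pos ξ]
  refine ⟨twoPlane d i k (Real.cosh ξ) (Real.sinh ξ) (Real.sinh ξ) (Real.cosh ξ),
    boost_mem_G0 hik he ξ, ?_, ?_, ?_, ?_⟩
  · rw [twoPlane_mulVec d i k hik _ _ _ _ x k, if_neg (Ne.symm hik), if_pos rfl,
      hsinh, hcosh, hs0]
    field_simp
    first
    | linear_combination (x k - x k * R) * _root_.sq_abs (x i)
    | linear_combination (x k) * _root_.sq_abs (x i)
    | linear_combination (x k * R) * _root_.sq_abs (x i)
    | linear_combination (x k) * habs2
    | linear_combination (x k * R) * habs2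
  · intro hpos
    rw [twoPlane_mulVec d i k hik _ _ _ _ x i, if_pos rfl, hsinh, hcosh, hs0,
      abs_of_pos hpos]
    have hval : x i / R * x i + -(x k * x i) / (R * x i) * x k
        = (x i^2 - x k^2)/R := by
      field_simp; ring
    rw [hval]
    exact div_pos hR2 hR
  · intro p hpi hpk
    rw [twoPlane_mulVec d i k hik _ _ _ _ x p, if_neg hpi, if_neg hpk]
  · intro w hwi hwk
    funext p
    rw [twoPlane_mulVec d i k hik _ _ _ _ w p]
    split_ifs with h1 h2
    · rw [hwi, hwk]; subst h1; rw [hwi]; ring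
    · rw [hwi, hwk]; subst h2; rw [hwk]; ring
    · rfl

/-- Kill all interior coordinates of `x`, fixing all vectors supported away from
interior indices and the pivot `i`. -/
lemma kill_all {d : ℕ} {i o : Fin (d+1)} (hi : eta d i = 1) (ho : eta d o = 1)
    (hio : i ≠ o) (s : Finset (Fin (d+1))) :
    ∀ x : Fin (d+1) → ℝ, x o = 0 → formR d x x = 1 →
    (∀ j, eta d j = -1 → j ∉ s → x j = 0) →
    ∃ Λ ∈ G0 d, ∃ c : ℝ, Λ *ᵥ x = Pi.single i c ∧ (0 < x i → 0 < c) ∧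
      (∀ w : Fin (d+1) → ℝ, w i = 0 → (∀ j, eta d j = -1 → w j = 0) → Λ *ᵥ w = w) := by
  induction s using Finset.induction_on with
  | empty =>
    intro x hxo hx hsupp
    refine ⟨1, one_mem_G0 d, x i, ?_, fun h => h, fun w _ _ => Matrix.one_mulVec w⟩
    rw [Matrix.one_mulVec]
    funext p
    by_cases hp : p = i
    · subst hp; rw [Pi.single_eq_same]
    · rw [Pi.single_eq_of_ne hp]
      rcases eta_values d p with h1 | h1
      · rcases (eta_eq_one_iff d p).mp h1 with rfl | rfl <;>
          rcases (eta_eq_one_iff d i).mp hi with rfl | rfl <;>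
          rcases (eta_eq_one_iff d o).mp ho with rfl | rfl <;> simp_all
      · exact hsupp p h1 (Finset.notMem_empty p)
  | @insert j t hjt ih =>
    intro x hxo hx hsupp
    by_cases hj : eta d j = -1 ∧ x j ≠ 0
    · -- boost in the (i, j) plane
      have hji : j ≠ i := fun h => by rw [h, hi] at hj; norm_num at hj
      have hjo : j ≠ o := fun h => by rw [h, ho] at hj; norm_num at hj
      have hij : i ≠ j := Ne.symm hji
      have he : eta d i = -eta d j := by rw [hj.1, hi]; norm_num
      have hbig : x j ^ 2 < x i ^ 2 := by
        have hdec := formR_self_decomp hi ho hio x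
        rw [hxo, hx] at hdec
        have hjmem : j ∈ Finset.univ \ ({i, o} : Finset (Fin (d+1))) := by
          simp [hji, hjo]
        have hle : x j * x j ≤ ∑ μ ∈ Finset.univ \ ({i, o} : Finset (Fin (d+1))), x μ * x μ :=
          Finset.single_le_sum (fun μ _ => mul_self_nonneg (x μ)) hjmem
        have hxj : 0 < x j * x j := mul_self_pos.mpr hj.2
        nlinarith
      obtain ⟨Λb, hΛb, hk0, hkpos, hkoff, hkfix⟩ := exists_boost hij he x hbig
      set x' := Λb *ᵥ x with hx'
      have hx'o : x' o = 0 := by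
        rw [hkoff o (Ne.symm hio) (Ne.symm hjo)]; exact hxo
      have hx'f : formR d x' x' = 1 := by
        rw [hx', (G0_subset_Ggrp d hΛb) x x]; exact hx
      have hx'supp : ∀ p, eta d p = -1 → p ∉ t → x' p = 0 := by
        intro p hp hpt
        by_cases hpj : p = j
        · subst hpj; exact hk0
        · have hpi : p ≠ i := fun h => by rw [h, hi] at hp; norm_num at hp
          rw [hkoff p hpi hpj]
          exact hsupp p hp (by simp [hpt, hpj])
      obtain ⟨Λ2, hΛ2, c, hc, hcpos, hcfix⟩ := ih x' hx'o hx'f hx'supp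
      refine ⟨Λ2 * Λb, G0_mul hΛ2 hΛb, c, ?_, ?_, ?_⟩
      · rw [← Matrix.mulVec_mulVec, ← hx', hc]
      · intro hpos
        exact hcpos (hkpos hpos)
      · intro w hwi hwsupp
        rw [← Matrix.mulVec_mulVec, hkfix w hwi (hwsupp j hj.1), hcfix w hwi hwsupp]
    · -- nothing to do for j
      push_neg at hj
      refine ih x hxo hx ?_
      intro p hp hpt
      by_cases hpj : p = j
      · subst hpj; exact hj hp
      · exact hsupp p hp (by simp [hpt, hpj])

lemma reduce_pivot {d : ℕ} {i o : Fin (d+1)} (hi : eta d i = 1) (ho : eta d o = 1)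
    (hio : i ≠ o) (x : Fin (d+1) → ℝ) (hxo : x o = 0) (hx : formR d x x = 1) :
    ∃ Λ ∈ G0 d, ∃ c : ℝ, Λ *ᵥ x = Pi.single i c ∧ (0 < x i → 0 < c) ∧ c^2 = 1 ∧
      (∀ w : Fin (d+1) → ℝ, w i = 0 → (∀ j, eta d j = -1 → w j = 0) → Λ *ᵥ w = w) := by
  obtain ⟨Λ, hΛ, c, hc, hcpos, hcfix⟩ :=
    kill_all hi ho hio Finset.univ x hxo hx (fun j _ hj => absurd (Finset.mem_univ j) hj)
  refine ⟨Λ, hΛ, c, hc, hcpos, ?_, hcfix⟩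
  have h1 : formR d (Λ *ᵥ x) (Λ *ᵥ x) = 1 := by rw [G0_subset_Ggrp d hΛ, hx]
  rw [hc, formR_single_left] at h1
  rw [Pi.single_eq_same, hi] at h1
  nlinarith [h1]

lemma zero_ne_last {d : ℕ} (hd : 1 ≤ d) : (0 : Fin (d+1)) ≠ Fin.last d := by
  intro h
  have := congrArg Fin.val h
  simp [Fin.last] at this
  omega

/-- Transitivity of `G₀` on positively-oriented orthonormal positive 2-frames. -/
lemma exists_G0_frame {d : ℕ} (hd : 1 ≤ d) (b a : Fin (d+1) → ℝ)
    (hb : formR d b b = 1) (ha : formR d a a = 1) (hba : formR d b a = 0)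
    (hor : 0 < b 0 * a (Fin.last d) - b (Fin.last d) * a 0) :
    ∃ Λ ∈ G0 d, Λ *ᵥ Pi.single 0 1 = b ∧ Λ *ᵥ Pi.single (Fin.last d) 1 = a := by
  have h0l : (0 : Fin (d+1)) ≠ Fin.last d := zero_ne_last hd
  -- Step A: rotate b into the (0, last) plane.
  have hsum : 1 ≤ b 0^2 + b (Fin.last d)^2 := by
    have hdec := formR_self_decomp (eta_zero d) (eta_last d) h0l b
    have hnn : 0 ≤ ∑ μ ∈ Finset.univ \ ({0, Fin.last d} : Finset (Fin (d+1))), b μ * b μ :=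
      Finset.sum_nonneg fun μ _ => mul_self_nonneg _
    nlinarith [hb, hdec]
  set r := Real.sqrt (b 0^2 + b (Fin.last d)^2) with hrdef
  have hr : 0 < r := Real.sqrt_pos.mpr (by linarith)
  have hrne : r ≠ 0 := ne_of_gt hr
  have hrsq : r^2 = b 0^2 + b (Fin.last d)^2 := Real.sq_sqrt (by linarith)
  obtain ⟨θ, hcos, hsin⟩ := exists_cos_sin (b 0 / r) (-(b (Fin.last d)) / r) (by
    rw [div_pow, div_pow, neg_sq]
    field_simp
    linarith [hrsq])
  set Λ1 := twoPlane d 0 (Fin.last d) (Real.cos θ) (-Real.sin θ) (Real.sin θ) (Real.cos θ)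
    with hΛ1def
  have hΛ1 : Λ1 ∈ G0 d :=
    rot_mem_G0 h0l ((eta_zero d).trans (eta_last d).symm) θ
  set b1 := Λ1 *ᵥ b with hb1def
  have hb1_0 : b1 0 = r := by
    rw [hb1def, hΛ1def, twoPlane_mulVec d 0 (Fin.last d) h0l _ _ _ _ b 0, if_pos rfl,
      hcos, hsin]
    field_simp
    linarith [hrsq]
  have hb1_l : b1 (Fin.last d) = 0 := by
    rw [hb1def, hΛ1def, twoPlane_mulVec d 0 (Fin.last d) h0l _ _ _ _ b (Fin.last d),
      if_neg (Ne.symm h0l), if_pos rfl, hcos, hsin]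
    field_simp
    ring
  have hb1f : formR d b1 b1 = 1 := by
    rw [hb1def, (G0_subset_Ggrp d hΛ1) b b]; exact hb
  -- Step B: kill the interior components of b1.
  obtain ⟨Λ2, hΛ2, c, hc, hcpos, hcsq, _⟩ :=
    reduce_pivot (eta_zero d) (eta_last d) h0l b1 hb1_l hb1f
  have hc1 : c = 1 := sq_one_pos hcsq (hcpos (by rw [hb1_0]; exact hr))
  subst hc1
  set Λ21 := Λ2 * Λ1 with hΛ21def
  have hΛ21 : Λ21 ∈ G0 d := G0_mul hΛ2 hΛ1
  have hb21 : Λ21 *ᵥ b = Pi.single 0 1 := by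
    rw [hΛ21def, ← Matrix.mulVec_mulVec, ← hb1def, hc]
  -- Step C: now handle a.
  set a1 := Λ21 *ᵥ a with ha1def
  have ha1f : formR d a1 a1 = 1 := by
    rw [ha1def, (G0_subset_Ggrp d hΛ21) a a]; exact ha
  have ha1_0 : a1 0 = 0 := by
    have h2 : formR d (Λ21 *ᵥ b) (Λ21 *ᵥ a) = 0 := by
      rw [(G0_subset_Ggrp d hΛ21) b a]; exact hba
    rw [hb21, ← ha1def, formR_single_left, eta_zero d] at h2
    linarith
  obtain ⟨Λ3, hΛ3, c', hc', hc'pos, hc'sq, hfix⟩ :=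
    reduce_pivot (eta_last d) (eta_zero d) (Ne.symm h0l) a1 ha1_0 ha1f
  set Λt := Λ3 * Λ21 with hΛtdef
  have hΛt : Λt ∈ G0 d := G0_mul hΛ3 hΛ21
  have hbt : Λt *ᵥ b = Pi.single 0 1 := by
    rw [hΛtdef, ← Matrix.mulVec_mulVec, hb21]
    apply hfix
    · exact Pi.single_eq_of_ne (Ne.symm h0l) 1
    · intro j hj
      apply Pi.single_eq_of_ne
      intro hj0
      rw [hj0, eta_zero d] at hj
      norm_num at hj
  have hat : Λt *ᵥ a = Pi.single (Fin.last d) c' := by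
    rw [hΛtdef, ← Matrix.mulVec_mulVec, ← ha1def, hc']
  have horT := G0_orientation hΛt hb ha hba hor
  rw [hbt, hat] at horT
  have hc'p : 0 < c' := by
    rw [Pi.single_eq_same, Pi.single_eq_same, Pi.single_eq_of_ne (Ne.symm h0l),
      Pi.single_eq_of_ne h0l] at horT
    linarith
  have hc'1 : c' = 1 := sq_one_pos hc'sq hc'p
  subst hc'1
  refine ⟨Ginv d Λt, G0_inv hΛt, ?_, ?_⟩
  · rw [← hbt, Matrix.mulVec_mulVec, Ginv_mul (G0_subset_Ggrp d hΛt), Matrix.one_mulVec]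
  · rw [← hat, Matrix.mulVec_mulVec, Ginv_mul (G0_subset_Ggrp d hΛt), Matrix.one_mulVec]


/-- Exponential of a matrix applied to an eigenvector. -/
lemma exp_mulVec_eigen {n : ℕ} (A : Matrix (Fin n) (Fin n) ℂ) (v : Fin n → ℂ) (μ : ℂ)
    (h : A *ᵥ v = μ • v) :
    (NormedSpace.exp A) *ᵥ v = Complex.exp μ • v := by
  letI : SeminormedRing (Matrix (Fin n) (Fin n) ℂ) := Matrix.linftyOpSemiNormedRing
  letI : NormedRing (Matrix (Fin n) (Fin n) ℂ) := Matrix.linftyOpNormedRing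
  letI : NormedAlgebra ℂ (Matrix (Fin n) (Fin n) ℂ) := Matrix.linftyOpNormedAlgebra
  have hpow : ∀ m : ℕ, (A ^ m) *ᵥ v = (μ ^ m) • v := by
    intro m
    induction m with
    | zero => simp [Matrix.one_mulVec]
    | succ m ihm =>
      rw [pow_succ, ← Matrix.mulVec_mulVec, h, Matrix.mulVec_smul, ihm, smul_smul,
        mul_comm, ← pow_succ]
  let L : Matrix (Fin n) (Fin n) ℂ →ₗ[ℂ] (Fin n → ℂ) :=
    { toFun := fun B => B *ᵥ v
      map_add' := fun B C => Matrix.add_mulVec B C v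
      map_smul' := fun c B => Matrix.smul_mulVec c B v }
  let Lc : Matrix (Fin n) (Fin n) ℂ →L[ℂ] (Fin n → ℂ) := LinearMap.toContinuousLinearMap L
  have hsum := NormedSpace.expSeries_summable' (𝕂 := ℂ) A
  have hsumμ := NormedSpace.expSeries_summable' (𝕂 := ℂ) μ
  rw [NormedSpace.exp_eq_tsum ℂ]
  calc (∑' m : ℕ, ((m.factorial : ℂ))⁻¹ • A ^ m) *ᵥ v
      = Lc (∑' m : ℕ, ((m.factorial : ℂ))⁻¹ • A ^ m) := rfl
    _ = ∑' m : ℕ, Lc (((m.factorial : ℂ))⁻¹ • A ^ m) := Lc.map_tsum hsum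
    _ = ∑' m : ℕ, (((m.factorial : ℂ))⁻¹ * μ ^ m) • v := by
        refine tsum_congr fun m => ?_
        rw [_root_.map_smul]
        show ((m.factorial : ℂ))⁻¹ • ((A ^ m) *ᵥ v) = _
        rw [hpow m, smul_smul]
    _ = (∑' m : ℕ, ((m.factorial : ℂ))⁻¹ * μ ^ m) • v := by
        apply Summable.tsum_smul_const
        simpa [smul_eq_mul] using hsumμ
    _ = Complex.exp μ • v := by
        congr 1
        rw [Complex.exp_eq_exp_ℂ, NormedSpace.exp_eq_tsum ℂ]
        simp [smul_eq_mul]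

lemma ell_mulVec (d : ℕ) (a b x : Fin (d+1) → ℝ) :
    ell d a b *ᵥ x = formR d b x • a - formR d a x • b := by
  funext i
  simp only [ell, Matrix.mulVec, dotProduct, Matrix.of_apply, Pi.sub_apply,
    Pi.smul_apply, smul_eq_mul, formR]
  rw [Finset.sum_mul, Finset.sum_mul, ← Finset.sum_sub_distrib]
  refine Finset.sum_congr rfl fun j _ => ?_
  ring

lemma toC_mulVec (d : ℕ) (M : Matrix (Fin (d+1)) (Fin (d+1)) ℝ) (x : Fin (d+1) → ℝ) :
    toC d M *ᵥ toCv d x = toCv d (M *ᵥ x) := by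
  funext i
  simp only [toC, toCv, Matrix.mulVec, dotProduct, Matrix.map_apply]
  norm_cast

lemma toC_mul (d : ℕ) (M N : Matrix (Fin (d+1)) (Fin (d+1)) ℝ) :
    toC d (M * N) = toC d M * toC d N := by
  ext i j
  simp only [toC, Matrix.map_apply, Matrix.mul_apply]
  norm_cast

lemma toC_one (d : ℕ) : toC d (1 : Matrix (Fin (d+1)) (Fin (d+1)) ℝ) = 1 :=
  Matrix.map_one _ Complex.ofReal_zero Complex.ofReal_one

/-- The fundamental explicit formula for `exp (σ ℓ(a∧b))` applied to a real vector. -/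
lemma exp_ell_mulVec {d : ℕ} {a b : Fin (d+1) → ℝ} (ha : formR d a a = 1)
    (hb : formR d b b = 1) (hab : formR d a b = 0) (c : Fin (d+1) → ℝ) (σ : ℂ) :
    (NormedSpace.exp (σ • toC d (ell d a b))) *ᵥ (toCv d c)
      = fun μ => ((c μ - formR d a c * a μ - formR d b c * b μ : ℝ) : ℂ)
          + (Complex.exp (-Complex.I*σ) * (((formR d a c : ℂ) + (formR d b c : ℂ) * Complex.I)/2)
             + Complex.exp (Complex.I*σ) * (((formR d a c : ℂ) - (formR d b c : ℂ) * Complex.I)/2)) * (a μ:ℂ)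
          + ((-Complex.I) * Complex.exp (-Complex.I*σ) * (((formR d a c : ℂ) + (formR d b c : ℂ) * Complex.I)/2)
             + Complex.I * Complex.exp (Complex.I*σ) * (((formR d a c : ℂ) - (formR d b c : ℂ) * Complex.I)/2)) * (b μ:ℂ) := by
  have hba : formR d b a = 0 := (formR_symm d b a).trans hab
  set α := formR d a c with hα
  set β := formR d b c with hβ
  set cp : Fin (d+1) → ℝ := c - α • a - β • b with hcp
  have hMa : ell d a b *ᵥ a = -b := by
    rw [ell_mulVec, hba, ha]; funext μ; simp
  have hMb : ell d a b *ᵥ b = a := by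
    rw [ell_mulVec, hb, hab]; funext μ; simp
  have hacp : formR d a cp = 0 := by
    rw [hcp, formR_sub_right, formR_sub_right, formR_smul_right, formR_smul_right,
      ha, hab, ← hα]; ring
  have hbcp : formR d b cp = 0 := by
    rw [hcp, formR_sub_right, formR_sub_right, formR_smul_right, formR_smul_right,
      hba, hb, ← hβ]; ring
  have hMcp : ell d a b *ᵥ cp = 0 := by
    rw [ell_mulVec, hacp, hbcp]; funext μ; simp
  set pvec : Fin (d+1) → ℂ := toCv d a - Complex.I • toCv d b with hpvec
  set qvec : Fin (d+1) → ℂ := toCv d a + Complex.I • toCv d b with hqvec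
  have hp : (σ • toC d (ell d a b)) *ᵥ pvec = (-Complex.I*σ) • pvec := by
    rw [hpvec, Matrix.smul_mulVec, Matrix.mulVec_sub, Matrix.mulVec_smul,
      toC_mulVec, toC_mulVec, hMa, hMb]
    funext μ
    simp only [Pi.smul_apply, Pi.sub_apply, Pi.neg_apply, smul_eq_mul, toCv,
      Complex.ofReal_neg]
    linear_combination (-σ * ((b μ : ℝ):ℂ)) * Complex.I_mul_I
  have hq : (σ • toC d (ell d a b)) *ᵥ qvec = (Complex.I*σ) • qvec := by
    rw [hqvec, Matrix.smul_mulVec, Matrix.mulVec_add, Matrix.mulVec_smul,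
      toC_mulVec, toC_mulVec, hMa, hMb]
    funext μ
    simp only [Pi.smul_apply, Pi.add_apply, Pi.neg_apply, smul_eq_mul, toCv,
      Complex.ofReal_neg]
    linear_combination (-σ * ((b μ : ℝ):ℂ)) * Complex.I_mul_I
  have h0 : (σ • toC d (ell d a b)) *ᵥ toCv d cp = (0:ℂ) • toCv d cp := by
    rw [Matrix.smul_mulVec, toC_mulVec, hMcp]
    funext μ
    simp [toCv]
  have hdecomp : toCv d c = toCv d cp + (((α:ℂ) + (β:ℂ)*Complex.I)/2) • pvec
      + (((α:ℂ) - (β:ℂ)*Complex.I)/2) • qvec := by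
    funext μ
    simp only [hpvec, hqvec, hcp, toCv, Pi.add_apply, Pi.sub_apply, Pi.smul_apply,
      smul_eq_mul, Complex.ofReal_sub, Complex.ofReal_mul]
    push_cast
    linear_combination (((β:ℝ):ℂ) * ((b μ : ℝ):ℂ)) * Complex.I_mul_I
  rw [hdecomp, Matrix.mulVec_add, Matrix.mulVec_add, Matrix.mulVec_smul, Matrix.mulVec_smul,
    exp_mulVec_eigen _ _ _ h0, exp_mulVec_eigen _ _ _ hp, exp_mulVec_eigen _ _ _ hq]
  funext μ
  simp only [hpvec, hqvec, hcp, toCv, Pi.add_apply, Pi.sub_apply, Pi.smul_apply,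
    smul_eq_mul, Complex.exp_zero, one_mul]
  push_cast
  ring

lemma cexp_negI (σ : ℂ) : Complex.exp (-Complex.I*σ)
    = (Real.exp σ.im : ℂ) * ((Real.cos σ.re : ℂ) - (Real.sin σ.re : ℂ) * Complex.I) := by
  rw [Complex.exp_eq_exp_re_mul_sin_add_cos]
  have h1 : (-Complex.I*σ).re = σ.im := by simp
  have h2 : (-Complex.I*σ).im = -σ.re := by simp
  rw [h1, h2]
  push_cast [Complex.cos_neg, Complex.sin_neg]
  ring

lemma cexp_posI (σ : ℂ) : Complex.exp (Complex.I*σ)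
    = (Real.exp (-σ.im) : ℂ) * ((Real.cos σ.re : ℂ) + (Real.sin σ.re : ℂ) * Complex.I) := by
  rw [Complex.exp_eq_exp_re_mul_sin_add_cos]
  have h1 : (Complex.I*σ).re = -σ.im := by simp
  have h2 : (Complex.I*σ).im = σ.re := by simp
  rw [h1, h2]
  push_cast
  ring

set_option maxHeartbeats 1600000 in
lemma Z1plus_subset_A1 {d : ℕ} (hd : 1 ≤ d) : Z1plus d ⊆ A1 d := by
  rintro z ⟨M, ⟨a, b, ha, hb, hab, hor, rfl⟩, c, hc, τ, hτ, rfl⟩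
  have hc' : formR d c c = 1 := hc
  have hba : formR d b a = 0 := (formR_symm d b a).trans hab
  set α := formR d a c with hα
  set β := formR d b c with hβ
  set cp : Fin (d+1) → ℝ := c - α • a - β • b with hcp
  have hca : formR d c a = α := (formR_symm d c a).trans hα.symm
  have hcb : formR d c b = β := (formR_symm d c b).trans hβ.symm
  have hacp : formR d a cp = 0 := by
    rw [hcp, formR_sub_right, formR_sub_right, formR_smul_right, formR_smul_right,
      ha, hab, ← hα]; ring
  have hbcp : formR d b cp = 0 := by
    rw [hcp, formR_sub_right, formR_sub_right, formR_smul_right, formR_smul_right,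
      hba, hb, ← hβ]; ring
  have hcpa : formR d cp a = 0 := (formR_symm d cp a).trans hacp
  have hcpb : formR d cp b = 0 := (formR_symm d cp b).trans hbcp
  have hcpcp : formR d cp cp = 1 - (α^2 + β^2) := by
    rw [hcp]
    simp only [formR_sub_left, formR_sub_right, formR_smul_left, formR_smul_right,
      ha, hb, hab, hba, hca, hcb, hc']
    ring
  have hαβ : 1 ≤ α^2 + β^2 := by
    have := orth_nonpos ha hb hab hacp hbcp
    rw [hcpcp] at this
    linarith
  -- the coefficient functions
  set Ru : ℂ → ℝ := fun σ => (α * Real.cos σ.re + β * Real.sin σ.re) * Real.cosh σ.im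
    with hRu
  set Iu : ℂ → ℝ := fun σ => (β * Real.cos σ.re - α * Real.sin σ.re) * Real.sinh σ.im
    with hIu
  set Rv : ℂ → ℝ := fun σ => (β * Real.cos σ.re - α * Real.sin σ.re) * Real.cosh σ.im
    with hRv
  set Iv : ℂ → ℝ := fun σ => -(α * Real.cos σ.re + β * Real.sin σ.re) * Real.sinh σ.im
    with hIv
  set Xv : ℂ → (Fin (d+1) → ℝ) := fun σ => cp + Ru σ • a + Rv σ • b with hXv
  set Yv : ℂ → (Fin (d+1) → ℝ) := fun σ => Iu σ • a + Iv σ • b with hYv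
  -- component formula
  have hform : ∀ σ : ℂ, ∀ μ, ((NormedSpace.exp (σ • toC d (ell d a b))).mulVec (toCv d c)) μ
      = ((Xv σ μ : ℝ) : ℂ) + ((Yv σ μ : ℝ) : ℂ) * Complex.I := by
    intro σ μ
    have h1 := congrFun (exp_ell_mulVec ha hb hab c σ) μ
    rw [← hα, ← hβ] at h1
    rw [h1, cexp_negI σ, cexp_posI σ]
    have hXvμ : Xv σ μ = cp μ + Ru σ * a μ + Rv σ * b μ := by
      rw [hXv]; simp [Pi.add_apply, Pi.smul_apply]
    have hYvμ : Yv σ μ = Iu σ * a μ + Iv σ * b μ := by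
      rw [hYv]; simp [Pi.add_apply, Pi.smul_apply]
    rw [hXvμ, hYvμ]
    simp only [hRu, hIu, hRv, hIv, hcp, Pi.sub_apply, Pi.smul_apply, smul_eq_mul,
      Real.cosh_eq, Real.sinh_eq]
    push_cast
    ring_nf
    simp only [Complex.I_sq, show (Complex.I)^3 = -Complex.I by
      rw [pow_succ, Complex.I_sq]; ring]
    ring
  have hre : ∀ σ : ℂ, ∀ μ,
      (((NormedSpace.exp (σ • toC d (ell d a b))).mulVec (toCv d c)) μ).re = Xv σ μ := by
    intro σ μ; rw [hform σ μ]; simp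
  have him : ∀ σ : ℂ, ∀ μ,
      (((NormedSpace.exp (σ • toC d (ell d a b))).mulVec (toCv d c)) μ).im = Yv σ μ := by
    intro σ μ; rw [hform σ μ]; simp
  -- quadratic forms
  have hXX : ∀ σ : ℂ, formR d (Xv σ) (Xv σ)
      = (1 - (α^2+β^2)) + (Ru σ^2 + Rv σ^2) := by
    intro σ
    rw [hXv]
    simp only [formR_add_left, formR_add_right, formR_smul_left, formR_smul_right,
      ha, hb, hab, hba, hacp, hbcp, hcpa, hcpb, hcpcp]
    ring
  have hXY : ∀ σ : ℂ, formR d (Xv σ) (Yv σ) = Ru σ * Iu σ + Rv σ * Iv σ := by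
    intro σ
    rw [hXv, hYv]
    simp only [formR_add_left, formR_add_right, formR_smul_left, formR_smul_right,
      ha, hb, hab, hba, hacp, hbcp, hcpa, hcpb]
    ring
  have hYY : ∀ σ : ℂ, formR d (Yv σ) (Yv σ) = Iu σ^2 + Iv σ^2 := by
    intro σ
    rw [hYv]
    simp only [formR_add_left, formR_add_right, formR_smul_left, formR_smul_right,
      ha, hb, hab, hba]
    ring
  -- numerical identities
  have n1 : ∀ σ : ℂ, Ru σ^2 + Rv σ^2 - (Iu σ^2 + Iv σ^2) = α^2 + β^2 := by
    intro σ
    simp only [hRu, hRv, hIu, hIv]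
    have h1 := Real.sin_sq_add_cos_sq σ.re
    have h2 := Real.cosh_sq_sub_sinh_sq σ.im
    linear_combination ((α^2+β^2)*(Real.cosh σ.im^2 - Real.sinh σ.im^2))*h1 + (α^2+β^2)*h2
  have n2 : ∀ σ : ℂ, Ru σ * Iu σ + Rv σ * Iv σ = 0 := by
    intro σ; simp only [hRu, hRv, hIu, hIv]; ring
  have n3 : ∀ σ : ℂ, Iu σ^2 + Iv σ^2 = (α^2+β^2) * Real.sinh σ.im^2 := by
    intro σ
    simp only [hIu, hIv]
    have h1 := Real.sin_sq_add_cos_sq σ.re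
    linear_combination ((α^2+β^2) * Real.sinh σ.im^2) * h1
  -- the orientation quantities
  set A0 := a 0 * cp (Fin.last d) - cp 0 * a (Fin.last d) with hA0
  set B0 := b 0 * cp (Fin.last d) - cp 0 * b (Fin.last d) with hB0
  set D := a 0 * b (Fin.last d) - a (Fin.last d) * b 0 with hD
  set g : ℂ → ℝ := fun σ => Iu σ * A0 + Iv σ * B0
      + ((α^2+β^2) * (Real.sinh σ.im * Real.cosh σ.im)) * D with hg
  have horval : ∀ σ : ℂ, Yv σ 0 * Xv σ (Fin.last d) - Xv σ 0 * Yv σ (Fin.last d) = g σ := by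
    intro σ
    have hx0 : Xv σ 0 = cp 0 + Ru σ * a 0 + Rv σ * b 0 := by rw [hXv]; simp
    have hxl : Xv σ (Fin.last d) = cp (Fin.last d) + Ru σ * a (Fin.last d)
        + Rv σ * b (Fin.last d) := by rw [hXv]; simp
    have hy0 : Yv σ 0 = Iu σ * a 0 + Iv σ * b 0 := by rw [hYv]; simp
    have hyl : Yv σ (Fin.last d) = Iu σ * a (Fin.last d) + Iv σ * b (Fin.last d) := by
      rw [hYv]; simp
    rw [hx0, hxl, hy0, hyl]
    simp only [hg, hA0, hB0, hD, hRu, hRv, hIu, hIv]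
    have h1 := Real.sin_sq_add_cos_sq σ.re
    linear_combination ((α^2+β^2) * Real.sinh σ.im * Real.cosh σ.im *
      (a 0 * b (Fin.last d) - a (Fin.last d) * b 0)) * h1
  -- conditions for all σ in the upper half plane
  have hcond : ∀ σ : ℂ, 0 < σ.im →
      (0 < formR d (Xv σ) (Xv σ) ∧ 0 < formR d (Yv σ) (Yv σ) ∧ formR d (Xv σ) (Yv σ) = 0) := by
    intro σ hσ
    have hS : 0 < Real.sinh σ.im := Real.sinh_pos_iff.mpr hσ
    have hyy : 0 < formR d (Yv σ) (Yv σ) := by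
      rw [hYY, n3]
      have : 0 < α^2+β^2 := by linarith
      positivity
    refine ⟨?_, hyy, by rw [hXY, n2]⟩
    have := n1 σ
    rw [hXX]
    rw [hYY] at hyy
    linarith
  have hne : ∀ σ ∈ {σ : ℂ | 0 < σ.im}, g σ ≠ 0 := by
    intro σ hσ
    obtain ⟨h1, h2, h3⟩ := hcond σ hσ
    have := or_ne_zero h1 h2 h3
    rw [horval σ] at this
    exact this
  -- positivity at a reference point
  have hDpos : 0 < D := by rw [hD]; exact hor
  set K := |β*A0 - α*B0| / ((α^2+β^2)*D) with hK
  have hKnn : 0 ≤ K := by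
    rw [hK]
    apply div_nonneg (abs_nonneg _)
    have : 0 < α^2+β^2 := by linarith
    positivity
  set T := Real.arsinh (K+1) with hT
  have hTpos : 0 < T := by
    rw [hT, Real.arsinh_pos_iff]; linarith
  have hsinhT : Real.sinh T = K + 1 := Real.sinh_arsinh _
  have hcoshK : K < Real.cosh T := by
    have h1 := Real.cosh_sq T
    have h2 := Real.cosh_pos T
    nlinarith [hsinhT]
  set σ0 : ℂ := (T : ℂ) * Complex.I with hσ0
  have hσ0re : σ0.re = 0 := by rw [hσ0]; simp
  have hσ0im : σ0.im = T := by rw [hσ0]; simp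
  have hσ0mem : σ0 ∈ {σ : ℂ | 0 < σ.im} := by
    simp only [Set.mem_setOf_eq, hσ0im]; exact hTpos
  have hgσ0 : 0 < g σ0 := by
    rw [hg, hIu, hIv]
    simp only [hσ0re, hσ0im, Real.cos_zero, Real.sin_zero]
    have hS : 0 < Real.sinh T := by rw [hsinhT]; linarith
    have hbound : |β*A0 - α*B0| < (α^2+β^2) * Real.cosh T * D := by
      have hKe : K * ((α^2+β^2)*D) = |β*A0 - α*B0| := by
        rw [hK]
        field_simp
      have h5 : 0 < α^2+β^2 := by linarith
      have h8 : 0 < (Real.cosh T - K) * ((α^2+β^2) * D) :=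
        mul_pos (sub_pos.mpr hcoshK) (mul_pos h5 hDpos)
      nlinarith [hKe, h8]
    nlinarith [hS, hbound, neg_abs_le (β*A0 - α*B0)]
  -- connectedness and sign propagation
  have hconn : IsPreconnected {σ : ℂ | 0 < σ.im} := (convex_halfSpace_im_gt 0).isPreconnected
  have hgcont : Continuous g := by
    rw [hg, hIu, hIv]
    fun_prop
  have hτmem : τ ∈ {σ : ℂ | 0 < σ.im} := hτ
  have hgτ : 0 < g τ := sign_const hconn hgcont.continuousOn hne hσ0mem hτmem hgσ0
  -- conclude membership in A1
  have hfr : (fun μ => (((NormedSpace.exp (τ • toC d (ell d a b))).mulVec (toCv d c)) μ).re)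
      = Xv τ := funext (hre τ)
  have hfi : (fun μ => (((NormedSpace.exp (τ • toC d (ell d a b))).mulVec (toCv d c)) μ).im)
      = Yv τ := funext (him τ)
  refine ⟨?_, ?_, ?_, ?_⟩
  · rw [hfr, hfi, hXX, hYY]
    have := n1 τ
    linarith
  · rw [hfr, hfi, hXY, n2]
  · rw [hfi]
    exact (hcond τ hτ).2.1
  · rw [him τ 0, hre τ (Fin.last d), hre τ 0, him τ (Fin.last d), horval τ]
    exact hgτ

lemma frame_e0_el (d : ℕ) (hd : 1 ≤ d) :
    formR d (Pi.single 0 1 : Fin (d+1) → ℝ) (Pi.single 0 1) = 1 ∧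
    formR d (Pi.single (Fin.last d) 1 : Fin (d+1) → ℝ) (Pi.single (Fin.last d) 1) = 1 ∧
    formR d (Pi.single 0 1 : Fin (d+1) → ℝ) (Pi.single (Fin.last d) 1) = 0 := by
  refine ⟨?_, ?_, ?_⟩ <;> rw [formR_single_left]
  · rw [eta_zero, Pi.single_eq_same]; ring
  · rw [eta_last, Pi.single_eq_same]; ring
  · rw [Pi.single_eq_of_ne (zero_ne_last hd)]; ring

lemma matrix_eq_of_mulVec {d : ℕ} {R : Type*} [CommRing R]
    {A B : Matrix (Fin (d+1)) (Fin (d+1)) R} (h : ∀ x, A *ᵥ x = B *ᵥ x) : A = B := by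
  ext i j
  have := congrFun (h (Pi.single j 1)) i
  rw [Matrix.mulVec_single, Matrix.mulVec_single] at this
  simpa using this

lemma exp_M0d_mulVec {d : ℕ} (hd : 1 ≤ d) (t : ℝ) :
    (NormedSpace.exp (((t:ℂ) * Complex.I) • toC d (M0d d))).mulVec
        (toCv d (Pi.single (Fin.last d) 1))
      = (Complex.I * (Real.sinh t : ℂ)) • toCv d (Pi.single 0 1)
        + ((Real.cosh t : ℂ)) • toCv d (Pi.single (Fin.last d) 1) := by
  obtain ⟨he0, hel, h0l⟩ := frame_e0_el d hd
  have h := exp_ell_mulVec he0 hel h0l (Pi.single (Fin.last d) 1) ((t:ℂ)*Complex.I)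
  have hexp1 : -Complex.I * ((t:ℂ)*Complex.I) = (t:ℂ) := by
    linear_combination (-(t:ℂ)) * Complex.I_mul_I
  have hexp2 : Complex.I * ((t:ℂ)*Complex.I) = -(t:ℂ) := by
    linear_combination ((t:ℂ)) * Complex.I_mul_I
  rw [hexp1, hexp2, h0l, hel] at h
  rw [show M0d d = ell d (Pi.single 0 1) (Pi.single (Fin.last d) 1) from rfl, h]
  funext μ
  simp only [Pi.add_apply, Pi.smul_apply, smul_eq_mul, toCv, Real.sinh_eq, Real.cosh_eq,
    Complex.ofReal_zero, Complex.ofReal_one, Complex.ofReal_div, Complex.ofReal_sub,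
    Complex.ofReal_add, Complex.ofReal_exp, Complex.ofReal_neg, Complex.exp_neg]
  push_cast
  ring_nf
  simp only [Complex.I_sq]
  ring

lemma T_subset_Z1plus {d : ℕ} (hd : 1 ≤ d) :
    {z : Fin (d+1) → ℂ | ∃ Λ ∈ G0 d, ∃ t : ℝ, 0 < t ∧
      z = (toC d Λ).mulVec ((NormedSpace.exp
        (((t : ℝ) * Complex.I) • toC d (M0d d))).mulVec
          (toCv d (Pi.single (Fin.last d) 1 : Fin (d+1) → ℝ)))} ⊆ Z1plus d := by
  rintro z ⟨Λ, hΛ, t, ht, rfl⟩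
  have hΛG : Λ ∈ Ggrp d := G0_subset_Ggrp d hΛ
  obtain ⟨he0, hel, h0l⟩ := frame_e0_el d hd
  have hor0 : 0 < (Pi.single 0 1 : Fin (d+1) → ℝ) 0
        * (Pi.single (Fin.last d) 1 : Fin (d+1) → ℝ) (Fin.last d)
      - (Pi.single 0 1 : Fin (d+1) → ℝ) (Fin.last d)
        * (Pi.single (Fin.last d) 1 : Fin (d+1) → ℝ) 0 := by
    rw [Pi.single_eq_same, Pi.single_eq_same, Pi.single_eq_of_ne (Ne.symm (zero_ne_last hd)),
      Pi.single_eq_of_ne (zero_ne_last hd)]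
    norm_num
  have horΛ := G0_orientation hΛ he0 hel h0l hor0
  -- the unit given by Λ
  have hval_inv : toC d Λ * toC d (Ginv d Λ) = 1 := by
    rw [← toC_mul, mul_Ginv hΛG, toC_one]
  have hinv_val : toC d (Ginv d Λ) * toC d Λ = 1 := by
    rw [← toC_mul, Ginv_mul hΛG, toC_one]
  set U : (Matrix (Fin (d+1)) (Fin (d+1)) ℂ)ˣ :=
    ⟨toC d Λ, toC d (Ginv d Λ), hval_inv, hinv_val⟩ with hU
  -- conjugation of the generator
  have hGinvG : Ginv d Λ ∈ Ggrp d := Ginv_mem_Ggrp hΛG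
  have hconj : Λ * M0d d * Ginv d Λ
      = ell d (Λ *ᵥ Pi.single 0 1) (Λ *ᵥ Pi.single (Fin.last d) 1) := by
    apply matrix_eq_of_mulVec
    intro x
    rw [← Matrix.mulVec_mulVec, ← Matrix.mulVec_mulVec]
    rw [show M0d d = ell d (Pi.single 0 1) (Pi.single (Fin.last d) 1) from rfl]
    rw [ell_mulVec, ell_mulVec, Matrix.mulVec_sub, Matrix.mulVec_smul, Matrix.mulVec_smul]
    have h1 : formR d (Pi.single (Fin.last d) 1) (Ginv d Λ *ᵥ x)
        = formR d (Λ *ᵥ Pi.single (Fin.last d) 1) x := by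
      rw [← hΛG (Pi.single (Fin.last d) 1) (Ginv d Λ *ᵥ x), Matrix.mulVec_mulVec,
        mul_Ginv hΛG, Matrix.one_mulVec]
    have h2 : formR d (Pi.single 0 1) (Ginv d Λ *ᵥ x)
        = formR d (Λ *ᵥ Pi.single 0 1) x := by
      rw [← hΛG (Pi.single 0 1) (Ginv d Λ *ᵥ x), Matrix.mulVec_mulVec,
        mul_Ginv hΛG, Matrix.one_mulVec]
    rw [h1, h2]
  refine ⟨ell d (Λ *ᵥ Pi.single 0 1) (Λ *ᵥ Pi.single (Fin.last d) 1),
    ⟨Λ *ᵥ Pi.single 0 1, Λ *ᵥ Pi.single (Fin.last d) 1,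
      by rw [hΛG]; exact he0, by rw [hΛG]; exact hel, by rw [hΛG]; exact h0l, horΛ, rfl⟩,
    Λ *ᵥ Pi.single (Fin.last d) 1, by show formR d _ _ = 1; rw [hΛG]; exact hel,
    (t:ℂ) * Complex.I, by simpa using ht, ?_⟩
  -- the exponential conjugation identity
  have hUval : (U : Matrix (Fin (d+1)) (Fin (d+1)) ℂ) = toC d Λ := rfl
  have hUinv : ((U⁻¹ : (Matrix (Fin (d+1)) (Fin (d+1)) ℂ)ˣ) : Matrix (Fin (d+1)) (Fin (d+1)) ℂ)
      = toC d (Ginv d Λ) := rfl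
  have hsmul : ((t:ℂ) * Complex.I) • toC d (Λ * M0d d * Ginv d Λ)
      = (U : Matrix (Fin (d+1)) (Fin (d+1)) ℂ)
        * (((t:ℂ) * Complex.I) • toC d (M0d d))
        * ((U⁻¹ : (Matrix (Fin (d+1)) (Fin (d+1)) ℂ)ˣ) : Matrix (Fin (d+1)) (Fin (d+1)) ℂ) := by
    rw [hUval, hUinv, toC_mul, toC_mul]
    rw [← smul_mul_assoc, ← mul_smul_comm]
  symm
  rw [← hconj, hsmul, Matrix.exp_units_conj U]
  rw [show toCv d (Λ *ᵥ Pi.single (Fin.last d) 1)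
      = toC d Λ *ᵥ toCv d (Pi.single (Fin.last d) 1) from (toC_mulVec _ _ _).symm]
  rw [hUval, hUinv, Matrix.mulVec_mulVec, Matrix.mul_assoc (toC d Λ * _), hinv_val,
    Matrix.mul_one, ← Matrix.mulVec_mulVec]

lemma A1_subset_T {d : ℕ} (hd : 1 ≤ d) :
    A1 d ⊆ {z : Fin (d+1) → ℂ | ∃ Λ ∈ G0 d, ∃ t : ℝ, 0 < t ∧
      z = (toC d Λ).mulVec ((NormedSpace.exp
        (((t : ℝ) * Complex.I) • toC d (M0d d))).mulVec
          (toCv d (Pi.single (Fin.last d) 1 : Fin (d+1) → ℝ)))} := by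
  rintro z ⟨h1, h2, h3, h4⟩
  set x : Fin (d+1) → ℝ := fun μ => (z μ).re with hx
  set y : Fin (d+1) → ℝ := fun μ => (z μ).im with hy
  have hyy : 0 < formR d y y := h3
  set lam := formR d y y with hlam
  have hxx : formR d x x = 1 + lam := by rw [hlam]; linarith [h1]
  set s1 := Real.sqrt lam with hs1
  set s2 := Real.sqrt (1+lam) with hs2
  have hs1pos : 0 < s1 := Real.sqrt_pos.mpr hyy
  have hs2pos : 0 < s2 := Real.sqrt_pos.mpr (by linarith)
  have hs1sq : s1^2 = lam := Real.sq_sqrt hyy.le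
  have hs2sq : s2^2 = 1 + lam := Real.sq_sqrt (by linarith)
  set b : Fin (d+1) → ℝ := s1⁻¹ • y with hbdef
  set a : Fin (d+1) → ℝ := s2⁻¹ • x with hadef
  have hbb : formR d b b = 1 := by
    rw [hbdef, formR_smul_left, formR_smul_right, ← hlam]
    field_simp
    nlinarith [hs1sq]
  have haa : formR d a a = 1 := by
    rw [hadef, formR_smul_left, formR_smul_right, hxx]
    field_simp
    nlinarith [hs2sq]
  have hba : formR d b a = 0 := by
    rw [hbdef, hadef, formR_smul_left, formR_smul_right,
      (formR_symm d y x).trans h2]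
    ring
  have horf : 0 < b 0 * a (Fin.last d) - b (Fin.last d) * a 0 := by
    have hb0 : b 0 = s1⁻¹ * y 0 := by rw [hbdef]; simp
    have hbl : b (Fin.last d) = s1⁻¹ * y (Fin.last d) := by rw [hbdef]; simp
    have ha0 : a 0 = s2⁻¹ * x 0 := by rw [hadef]; simp
    have hal : a (Fin.last d) = s2⁻¹ * x (Fin.last d) := by rw [hadef]; simp
    rw [hb0, hbl, ha0, hal]
    have hq : 0 < y 0 * x (Fin.last d) - x 0 * y (Fin.last d) := h4
    have hprod : 0 < s1⁻¹ * s2⁻¹ := by positivity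
    nlinarith [hq, hprod]
  obtain ⟨Λ, hΛ, hΛe0, hΛel⟩ := exists_G0_frame hd b a hbb haa hba horf
  set t := Real.arsinh s1 with ht
  have htpos : 0 < t := by rw [ht, Real.arsinh_pos_iff]; exact hs1pos
  have hsinh : Real.sinh t = s1 := Real.sinh_arsinh s1
  have hcosh : Real.cosh t = s2 := by
    rw [ht, Real.cosh_arsinh, hs2, hs1]
    congr 1
    rw [Real.sq_sqrt hyy.le]
  refine ⟨Λ, hΛ, t, htpos, ?_⟩
  rw [exp_M0d_mulVec hd t, Matrix.mulVec_add, Matrix.mulVec_smul, Matrix.mulVec_smul,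
    toC_mulVec, toC_mulVec, hΛe0, hΛel, hsinh, hcosh]
  funext μ
  simp only [Pi.add_apply, Pi.smul_apply, smul_eq_mul, toCv, hbdef, hadef,
    Complex.ofReal_mul, Complex.ofReal_inv]
  apply Complex.ext
  · simp only [Complex.add_re, Complex.mul_re, Complex.mul_im, Complex.I_re, Complex.I_im,
      ← Complex.ofReal_inv, Complex.ofReal_re, Complex.ofReal_im]
    field_simp
    simp only [hx, hy]; ring
  · simp only [Complex.add_im, Complex.mul_re, Complex.mul_im, Complex.I_re, Complex.I_im,
      ← Complex.ofReal_inv, Complex.ofReal_re, Complex.ofReal_im]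
    field_simp
    simp only [hx, hy]; ring


/-- the three descriptions of the future tuboid coincide:
`Z₁₊ = A₁ = {Λ exp(itM₀d) e_d : Λ ∈ G₀, t > 0}`. -/
theorem Z1plus_characterizations (d : ℕ) (hd : 2 ≤ d) :
    Z1plus d = A1 d ∧
    Z1plus d = {z | ∃ Λ ∈ G0 d, ∃ t : ℝ, 0 < t ∧
      z = (toC d Λ).mulVec ((NormedSpace.exp
        ((t * Complex.I) • toC d (M0d d))).mulVec
          (toCv d (Pi.single (Fin.last d) 1 : Fin (d+1) → ℝ)))} := by
  have hd1 : 1 ≤ d := le_trans (by norm_num) hd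
  have h1 : Z1plus d ⊆ A1 d := Z1plus_subset_A1 hd1
  have h2 := A1_subset_T hd1
  have h3 := T_subset_Z1plus hd1
  constructor
  · exact subset_antisymm h1 (h2.trans h3)
  · exact subset_antisymm (h1.trans h2) h3

end AdS
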